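/- arXiv:2105.12102 — 2 statements merged into one kernel-verified Lean document; each statement's English description precedes it below -/
import Mathlib

section
/- Let ρ : B_5 → GL_4(ℤ) denote the reduced Burau representation of the 5-strand braid group evaluated at t = -1. Then the characteristic polynomial of ρ(β) for β = σ_{13}σ_{24}σ_{14}σ_{25} (in band-generator notation) equals x^4 - x^3 + x^2 - x + 1. -/
/-- The braid relations for the braid group on 5 strands, with Artin generators
indexed by `Fin 4`. -/
def braidRels5 : Set (FreeGroup (Fin 4)) :=
  {r | (∃ i : Fin 3, r = FreeGroup.of i.castSucc * FreeGroup.of i.succ * FreeGroup.of i.castSucc *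
          (FreeGroup.of i.succ * FreeGroup.of i.castSucc * FreeGroup.of i.succ)⁻¹) ∨
       (∃ i j : Fin 4, (i : ℕ) + 2 ≤ (j : ℕ) ∧
          r = FreeGroup.of i * FreeGroup.of j * (FreeGroup.of j * FreeGroup.of i)⁻¹)}

/-- The braid group `B₅` on 5 strands. -/
def B5 : Type := PresentedGroup braidRels5

noncomputable instance : Group B5 := by unfold B5; infer_instance

/-- The Artin generator `σ_k` of `B₅`, for `1 ≤ k ≤ 4` (and `1` for other indices). -/
noncomputable def artin (k : ℕ) : B5 :=
  if h : k - 1 < 4 then PresentedGroup.of (⟨k - 1, h⟩ : Fin 4) else 1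

/-- The band generator `σ_{ij} = (σ_{j-1} ⋯ σ_{i+1}) σ_i (σ_{j-1} ⋯ σ_{i+1})⁻¹`. -/
noncomputable def band (i j : ℕ) : B5 :=
  (((List.range' (i + 1) (j - i - 1)).reverse.map artin).prod) * artin i *
    (((List.range' (i + 1) (j - i - 1)).reverse.map artin).prod)⁻¹

/-- The reduced Burau matrices of the Artin generators of `B₅` at `t = -1`. -/
def burauNegOne : Fin 4 → Matrix (Fin 4) (Fin 4) ℤ
  | 0 => !![1, 0, 0, 0; 1, 1, 0, 0; 0, 0, 1, 0; 0, 0, 0, 1]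
  | 1 => !![1, -1, 0, 0; 0, 1, 0, 0; 0, 1, 1, 0; 0, 0, 0, 1]
  | 2 => !![1, 0, 0, 0; 0, 1, -1, 0; 0, 0, 1, 0; 0, 0, 1, 1]
  | 3 => !![1, 0, 0, 0; 0, 1, 0, 0; 0, 0, 1, -1; 0, 0, 0, 1]

/-- Inverses of the reduced Burau matrices at `t = -1`. -/
def burauNegOneInv : Fin 4 → Matrix (Fin 4) (Fin 4) ℤ
  | 0 => !![1, 0, 0, 0; -1, 1, 0, 0; 0, 0, 1, 0; 0, 0, 0, 1]
  | 1 => !![1, 1, 0, 0; 0, 1, 0, 0; 0, -1, 1, 0; 0, 0, 0, 1]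
  | 2 => !![1, 0, 0, 0; 0, 1, 1, 0; 0, 0, 1, 0; 0, 0, -1, 1]
  | 3 => !![1, 0, 0, 0; 0, 1, 0, 0; 0, 0, 1, 1; 0, 0, 0, 1]

lemma burau_mul_inv : ∀ i : Fin 4, burauNegOneInv i * burauNegOne i = 1 := by decide

lemma charpoly_target :
    (!![1, -1, 0, -2; -3, 3, 1, 8; 0, 0, 0, 1; 2, -1, -1, -3] :
        Matrix (Fin 4) (Fin 4) ℤ).charpoly =
      Polynomial.X ^ 4 - Polynomial.X ^ 3 + Polynomial.X ^ 2 - Polynomial.X + 1 := by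
  rw [Matrix.charpoly]
  have hc : Matrix.charmatrix (!![1, -1, 0, -2; -3, 3, 1, 8; 0, 0, 0, 1; 2, -1, -1, -3] :
      Matrix (Fin 4) (Fin 4) ℤ) =
      !![Polynomial.X - Polynomial.C 1, -Polynomial.C (-1), -Polynomial.C 0, -Polynomial.C (-2);
         -Polynomial.C (-3), Polynomial.X - Polynomial.C 3, -Polynomial.C 1, -Polynomial.C 8;
         -Polynomial.C 0, -Polynomial.C 0, Polynomial.X - Polynomial.C 0, -Polynomial.C 1;
         -Polynomial.C 2, -Polynomial.C (-1), -Polynomial.C (-1),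
           Polynomial.X - Polynomial.C (-3)] := by
    ext i j
    fin_cases i <;> fin_cases j <;>
      simp [Matrix.charmatrix_apply, Matrix.diagonal_apply]
  rw [hc, Matrix.det_succ_row_zero]
  simp only [Fin.sum_univ_four, Matrix.det_fin_three, Matrix.submatrix_apply]
  norm_num [Fin.succAbove, Fin.lt_def, show ((3 : Fin 4) : ℕ) = 3 from rfl,
    show ((2 : Fin 3) : ℕ) = 2 from rfl, Fin.castSucc, Fin.succ, Fin.castAdd, Fin.castLE]
  simp only [Matrix.cons_val_two, Matrix.cons_val_three, Matrix.tail_cons, Matrix.head_cons]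
  ring

theorem stmt_10 (ρ : B5 →* Matrix.GeneralLinearGroup (Fin 4) ℤ)
    (hρ : ∀ i : Fin 4,
      ((ρ (PresentedGroup.of i) : Matrix.GeneralLinearGroup (Fin 4) ℤ) :
          Matrix (Fin 4) (Fin 4) ℤ) = burauNegOne i) :
    (((ρ (band 1 3 * band 2 4 * band 1 4 * band 2 5) : Matrix.GeneralLinearGroup (Fin 4) ℤ) :
        Matrix (Fin 4) (Fin 4) ℤ)).charpoly =
      Polynomial.X ^ 4 - Polynomial.X ^ 3 + Polynomial.X ^ 2 - Polynomial.X + 1 := by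
  have hinv : ∀ i : Fin 4,
      ((ρ ((PresentedGroup.of i : B5)⁻¹) : Matrix.GeneralLinearGroup (Fin 4) ℤ) :
        Matrix (Fin 4) (Fin 4) ℤ) = burauNegOneInv i := by
    intro i
    have h1 : ((ρ ((PresentedGroup.of i : B5)⁻¹) : Matrix.GeneralLinearGroup (Fin 4) ℤ) :
        Matrix (Fin 4) (Fin 4) ℤ) * burauNegOne i = 1 := by
      rw [← hρ i, ← Units.val_mul]; erw [← map_mul, inv_mul_cancel, map_one, Units.val_one]
    calc ((ρ ((PresentedGroup.of i : B5)⁻¹) : Matrix.GeneralLinearGroup (Fin 4) ℤ) :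
          Matrix (Fin 4) (Fin 4) ℤ)
        = ((ρ ((PresentedGroup.of i : B5)⁻¹) : Matrix.GeneralLinearGroup (Fin 4) ℤ) :
          Matrix (Fin 4) (Fin 4) ℤ) * (burauNegOne i * burauNegOneInv i) := by
          rw [mul_eq_one_comm.mp (burau_mul_inv i), mul_one]
      _ = (((ρ ((PresentedGroup.of i : B5)⁻¹) : Matrix.GeneralLinearGroup (Fin 4) ℤ) :
          Matrix (Fin 4) (Fin 4) ℤ) * burauNegOne i) * burauNegOneInv i := by
          rw [mul_assoc]
      _ = burauNegOneInv i := by rw [h1, one_mul]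
  have hb : band 1 3 * band 2 4 * band 1 4 * band 2 5 =
      (PresentedGroup.of (1 : Fin 4) * PresentedGroup.of (0 : Fin 4) *
        (PresentedGroup.of (1 : Fin 4))⁻¹) *
      (PresentedGroup.of (2 : Fin 4) * PresentedGroup.of (1 : Fin 4) *
        (PresentedGroup.of (2 : Fin 4))⁻¹) *
      (PresentedGroup.of (2 : Fin 4) * PresentedGroup.of (1 : Fin 4) *
        PresentedGroup.of (0 : Fin 4) *
        (PresentedGroup.of (2 : Fin 4) * PresentedGroup.of (1 : Fin 4))⁻¹) *
      (PresentedGroup.of (3 : Fin 4) * PresentedGroup.of (2 : Fin 4) *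
        PresentedGroup.of (1 : Fin 4) *
        (PresentedGroup.of (3 : Fin 4) * PresentedGroup.of (2 : Fin 4))⁻¹) := by
    show (((List.range' 2 1).reverse.map artin).prod) * artin 1 *
        (((List.range' 2 1).reverse.map artin).prod)⁻¹ *
      ((((List.range' 3 1).reverse.map artin).prod) * artin 2 *
        (((List.range' 3 1).reverse.map artin).prod)⁻¹) *
      ((((List.range' 2 2).reverse.map artin).prod) * artin 1 *
        (((List.range' 2 2).reverse.map artin).prod)⁻¹) *
      ((((List.range' 3 2).reverse.map artin).prod) * artin 2 *
        (((List.range' 3 2).reverse.map artin).prod)⁻¹) = _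
    norm_num [List.range', artin]
    group
    rfl
  have hmat : ((ρ (band 1 3 * band 2 4 * band 1 4 * band 2 5) :
      Matrix.GeneralLinearGroup (Fin 4) ℤ) : Matrix (Fin 4) (Fin 4) ℤ) =
      !![1, -1, 0, -2; -3, 3, 1, 8; 0, 0, 0, 1; 2, -1, -1, -3] := by
    rw [hb]
    have hm : ∀ a b : PresentedGroup braidRels5, ρ (a * b) = ρ a * ρ b := fun a b => map_mul ρ a b
    have hi : ∀ i : Fin 4, ((ρ (@Inv.inv (PresentedGroup braidRels5) _ (PresentedGroup.of i)) :
        Matrix.GeneralLinearGroup (Fin 4) ℤ) : Matrix (Fin 4) (Fin 4) ℤ) = burauNegOneInv i := hinv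
    have hw : ∀ a b : PresentedGroup braidRels5, @HMul.hMul (PresentedGroup braidRels5)
        (PresentedGroup braidRels5) B5 instHMul a b = (a * b : PresentedGroup braidRels5) := fun a b => rfl
    rw [hw]
    simp only [hm, Units.val_mul, mul_inv_rev, hρ, hi]
    decide
  rw [hmat, charpoly_target]
end

section
/- The five 5-braids σ_{13}σ_{24}σ_{14}σ_{25}, σ_{13}σ_{24}σ_{35}σ_{14}, σ_{13}σ_{24}σ_{35}σ_{25}, σ_{13}σ_{35}σ_{14}σ_{25}, and σ_{14}σ_{25}σ_{24}σ_{35} are pairwise conjugate in the braid group B_5. -/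
local notation "σ₁" => artin 1
local notation "σ₂" => artin 2
local notation "σ₃" => artin 3
local notation "σ₄" => artin 4

lemma rel_one {r : FreeGroup (Fin 4)} (h : r ∈ braidRels5) :
    (PresentedGroup.mk braidRels5 r : B5) = 1 :=
  (QuotientGroup.eq_one_iff _).mpr (Subgroup.subset_normalClosure h)

lemma braid_rel (i : Fin 3) :
    (PresentedGroup.of i.castSucc : B5) * PresentedGroup.of i.succ * PresentedGroup.of i.castSucc
      = PresentedGroup.of i.succ * PresentedGroup.of i.castSucc * PresentedGroup.of i.succ := by
  have h := rel_one (Or.inl ⟨i, rfl⟩)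
  rw [map_mul, map_mul, map_mul, map_inv, mul_inv_eq_one] at h
  exact h

lemma comm_rel (i j : Fin 4) (hij : (i : ℕ) + 2 ≤ (j : ℕ)) :
    (PresentedGroup.of i : B5) * PresentedGroup.of j
      = PresentedGroup.of j * PresentedGroup.of i := by
  have h := rel_one (Or.inr ⟨i, j, hij, rfl⟩)
  rw [map_mul, map_inv, map_mul, mul_inv_eq_one] at h
  exact h

lemma artin_eq (k : ℕ) (h : k - 1 < 4) : artin k = PresentedGroup.of (⟨k - 1, h⟩ : Fin 4) :=
  dif_pos h

lemma rab : σ₁ * σ₂ * σ₁ = σ₂ * σ₁ * σ₂ := by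
  have h := braid_rel 0
  rw [artin_eq 1 (by norm_num), artin_eq 2 (by norm_num)]
  exact h

lemma rbc : σ₂ * σ₃ * σ₂ = σ₃ * σ₂ * σ₃ := by
  have h := braid_rel 1
  rw [artin_eq 2 (by norm_num), artin_eq 3 (by norm_num)]
  exact h

lemma rcd : σ₃ * σ₄ * σ₃ = σ₄ * σ₃ * σ₄ := by
  have h := braid_rel 2
  rw [artin_eq 3 (by norm_num), artin_eq 4 (by norm_num)]
  exact h

lemma cac : σ₁ * σ₃ = σ₃ * σ₁ := by
  have h := comm_rel 0 2 (by decide)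
  rw [artin_eq 1 (by norm_num), artin_eq 3 (by norm_num)]
  exact h

lemma cad : σ₁ * σ₄ = σ₄ * σ₁ := by
  have h := comm_rel 0 3 (by decide)
  rw [artin_eq 1 (by norm_num), artin_eq 4 (by norm_num)]
  exact h

lemma cbd : σ₂ * σ₄ = σ₄ * σ₂ := by
  have h := comm_rel 1 3 (by decide)
  rw [artin_eq 2 (by norm_num), artin_eq 4 (by norm_num)]
  exact h

lemma e13 : band 1 3 = σ₂ * σ₁ * σ₂⁻¹ := by simp [band, List.range']
lemma e24 : band 2 4 = σ₃ * σ₂ * σ₃⁻¹ := by simp [band, List.range']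
lemma e35 : band 3 5 = σ₄ * σ₃ * σ₄⁻¹ := by simp [band, List.range']
lemma e14 : band 1 4 = σ₃ * σ₂ * σ₁ * σ₂⁻¹ * σ₃⁻¹ := by
  simp [band, List.range']; group
lemma e25 : band 2 5 = σ₄ * σ₃ * σ₂ * σ₃⁻¹ * σ₄⁻¹ := by
  simp [band, List.range']; group
local notation "Δ" => (artin 4 * artin 3 * artin 2 * artin 1)
local notation "τ" => (artin 4 * artin 3 * artin 2 * artin 1)⁻¹

lemma caci : σ₁ * σ₃⁻¹ = σ₃⁻¹ * σ₁ := by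
  calc σ₁ * σ₃⁻¹ = σ₃⁻¹ * (σ₃ * σ₁) * σ₃⁻¹ := by group
  _ = σ₃⁻¹ * σ₁ := by rw [← cac]; group

lemma Ldb : Δ * σ₂ = σ₁ * Δ := by
  calc Δ * σ₂ = σ₄ * σ₃ * (σ₂ * σ₁ * σ₂) := by group
  _ = σ₄ * σ₃ * (σ₁ * σ₂ * σ₁) := by rw [← rab]
  _ = σ₄ * (σ₃ * σ₁) * (σ₂ * σ₁) := by group
  _ = σ₄ * (σ₁ * σ₃) * (σ₂ * σ₁) := by rw [← cac]
  _ = (σ₄ * σ₁) * (σ₃ * (σ₂ * σ₁)) := by group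
  _ = (σ₁ * σ₄) * (σ₃ * (σ₂ * σ₁)) := by rw [← cad]
  _ = σ₁ * Δ := by group

lemma Ldc : Δ * σ₃ = σ₂ * Δ := by
  calc Δ * σ₃ = σ₄ * σ₃ * σ₂ * (σ₁ * σ₃) := by group
  _ = σ₄ * σ₃ * σ₂ * (σ₃ * σ₁) := by rw [cac]
  _ = σ₄ * (σ₃ * σ₂ * σ₃) * σ₁ := by group
  _ = σ₄ * (σ₂ * σ₃ * σ₂) * σ₁ := by rw [← rbc]
  _ = (σ₄ * σ₂) * (σ₃ * σ₂ * σ₁) := by group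
  _ = (σ₂ * σ₄) * (σ₃ * σ₂ * σ₁) := by rw [← cbd]
  _ = σ₂ * Δ := by group

lemma Ldd : Δ * σ₄ = σ₃ * Δ := by
  calc Δ * σ₄ = σ₄ * σ₃ * σ₂ * (σ₁ * σ₄) := by group
  _ = σ₄ * σ₃ * σ₂ * (σ₄ * σ₁) := by rw [cad]
  _ = σ₄ * σ₃ * (σ₂ * σ₄) * σ₁ := by group
  _ = σ₄ * σ₃ * (σ₄ * σ₂) * σ₁ := by rw [cbd]
  _ = (σ₄ * σ₃ * σ₄) * (σ₂ * σ₁) := by group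
  _ = (σ₃ * σ₄ * σ₃) * (σ₂ * σ₁) := by rw [← rcd]
  _ = σ₃ * Δ := by group

lemma ta : τ * σ₁ = σ₂ * τ := by
  calc τ * σ₁ = Δ⁻¹ * (σ₁ * Δ) * Δ⁻¹ := by group
  _ = Δ⁻¹ * (Δ * σ₂) * Δ⁻¹ := by rw [← Ldb]
  _ = σ₂ * τ := by group

lemma tb : τ * σ₂ = σ₃ * τ := by
  calc τ * σ₂ = Δ⁻¹ * (σ₂ * Δ) * Δ⁻¹ := by group
  _ = Δ⁻¹ * (Δ * σ₃) * Δ⁻¹ := by rw [← Ldc]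
  _ = σ₃ * τ := by group

lemma tc : τ * σ₃ = σ₄ * τ := by
  calc τ * σ₃ = Δ⁻¹ * (σ₃ * Δ) * Δ⁻¹ := by group
  _ = Δ⁻¹ * (Δ * σ₄) * Δ⁻¹ := by rw [← Ldd]
  _ = σ₄ * τ := by group

lemma tbi : τ * σ₂⁻¹ = σ₃⁻¹ * τ := by
  calc τ * σ₂⁻¹ = σ₃⁻¹ * ((σ₃ * τ) * σ₂⁻¹) := by group
  _ = σ₃⁻¹ * ((τ * σ₂) * σ₂⁻¹) := by rw [← tb]
  _ = σ₃⁻¹ * τ := by group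

lemma tci : τ * σ₃⁻¹ = σ₄⁻¹ * τ := by
  calc τ * σ₃⁻¹ = σ₄⁻¹ * ((σ₄ * τ) * σ₃⁻¹) := by group
  _ = σ₄⁻¹ * ((τ * σ₃) * σ₃⁻¹) := by rw [← tc]
  _ = σ₄⁻¹ * τ := by group

lemma tB13 : τ * (σ₂ * σ₁ * σ₂⁻¹) * τ⁻¹ = σ₃ * σ₂ * σ₃⁻¹ := by
  calc τ * (σ₂ * σ₁ * σ₂⁻¹) * τ⁻¹ = (τ * σ₂) * (σ₁ * (σ₂⁻¹ * τ⁻¹)) := by group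
  _ = (σ₃ * τ) * (σ₁ * (σ₂⁻¹ * τ⁻¹)) := by rw [tb]
  _ = σ₃ * ((τ * σ₁) * (σ₂⁻¹ * τ⁻¹)) := by group
  _ = σ₃ * ((σ₂ * τ) * (σ₂⁻¹ * τ⁻¹)) := by rw [ta]
  _ = σ₃ * (σ₂ * ((τ * σ₂⁻¹) * τ⁻¹)) := by group
  _ = σ₃ * (σ₂ * ((σ₃⁻¹ * τ) * τ⁻¹)) := by rw [tbi]
  _ = σ₃ * σ₂ * σ₃⁻¹ := by group

lemma tB24 : τ * (σ₃ * σ₂ * σ₃⁻¹) * τ⁻¹ = σ₄ * σ₃ * σ₄⁻¹ := by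
  calc τ * (σ₃ * σ₂ * σ₃⁻¹) * τ⁻¹ = (τ * σ₃) * (σ₂ * (σ₃⁻¹ * τ⁻¹)) := by group
  _ = (σ₄ * τ) * (σ₂ * (σ₃⁻¹ * τ⁻¹)) := by rw [tc]
  _ = σ₄ * ((τ * σ₂) * (σ₃⁻¹ * τ⁻¹)) := by group
  _ = σ₄ * ((σ₃ * τ) * (σ₃⁻¹ * τ⁻¹)) := by rw [tb]
  _ = σ₄ * (σ₃ * ((τ * σ₃⁻¹) * τ⁻¹)) := by group
  _ = σ₄ * (σ₃ * ((σ₄⁻¹ * τ) * τ⁻¹)) := by rw [tci]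
  _ = σ₄ * σ₃ * σ₄⁻¹ := by group

lemma tB14 : τ * (σ₃ * σ₂ * σ₁ * σ₂⁻¹ * σ₃⁻¹) * τ⁻¹ = σ₄ * σ₃ * σ₂ * σ₃⁻¹ * σ₄⁻¹ := by
  calc τ * (σ₃ * σ₂ * σ₁ * σ₂⁻¹ * σ₃⁻¹) * τ⁻¹
      = (τ * σ₃) * (σ₂ * (σ₁ * (σ₂⁻¹ * (σ₃⁻¹ * τ⁻¹)))) := by group
  _ = (σ₄ * τ) * (σ₂ * (σ₁ * (σ₂⁻¹ * (σ₃⁻¹ * τ⁻¹)))) := by rw [tc]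
  _ = σ₄ * ((τ * σ₂) * (σ₁ * (σ₂⁻¹ * (σ₃⁻¹ * τ⁻¹)))) := by group
  _ = σ₄ * ((σ₃ * τ) * (σ₁ * (σ₂⁻¹ * (σ₃⁻¹ * τ⁻¹)))) := by rw [tb]
  _ = σ₄ * (σ₃ * ((τ * σ₁) * (σ₂⁻¹ * (σ₃⁻¹ * τ⁻¹)))) := by group
  _ = σ₄ * (σ₃ * ((σ₂ * τ) * (σ₂⁻¹ * (σ₃⁻¹ * τ⁻¹)))) := by rw [ta]
  _ = σ₄ * (σ₃ * (σ₂ * ((τ * σ₂⁻¹) * (σ₃⁻¹ * τ⁻¹)))) := by group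
  _ = σ₄ * (σ₃ * (σ₂ * ((σ₃⁻¹ * τ) * (σ₃⁻¹ * τ⁻¹)))) := by rw [tbi]
  _ = σ₄ * (σ₃ * (σ₂ * (σ₃⁻¹ * ((τ * σ₃⁻¹) * τ⁻¹)))) := by group
  _ = σ₄ * (σ₃ * (σ₂ * (σ₃⁻¹ * ((σ₄⁻¹ * τ) * τ⁻¹)))) := by rw [tci]
  _ = σ₄ * σ₃ * σ₂ * σ₃⁻¹ * σ₄⁻¹ := by group

lemma eq35 : (σ₄ * σ₃ * σ₄⁻¹) * Δ = Δ * (σ₃ * σ₂ * σ₁ * σ₂⁻¹ * σ₃⁻¹) := by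
  calc (σ₄ * σ₃ * σ₄⁻¹) * Δ = (σ₄ * σ₃) * ((σ₃ * σ₂ * σ₃) * (σ₃⁻¹ * σ₁)) := by group
  _ = (σ₄ * σ₃) * ((σ₂ * σ₃ * σ₂) * (σ₃⁻¹ * σ₁)) := by rw [← rbc]
  _ = (σ₄ * σ₃ * σ₂) * (σ₃ * (σ₂ * (σ₃⁻¹ * σ₁))) := by group
  _ = (σ₄ * σ₃ * σ₂) * (σ₃ * (σ₂ * (σ₁ * σ₃⁻¹))) := by rw [← caci]
  _ = (σ₄ * σ₃ * σ₂) * (σ₃ * ((σ₂ * σ₁ * σ₂) * (σ₂⁻¹ * σ₃⁻¹))) := by group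
  _ = (σ₄ * σ₃ * σ₂) * (σ₃ * ((σ₁ * σ₂ * σ₁) * (σ₂⁻¹ * σ₃⁻¹))) := by rw [← rab]
  _ = (σ₄ * σ₃ * σ₂) * ((σ₃ * σ₁) * (σ₂ * (σ₁ * (σ₂⁻¹ * σ₃⁻¹)))) := by group
  _ = (σ₄ * σ₃ * σ₂) * ((σ₁ * σ₃) * (σ₂ * (σ₁ * (σ₂⁻¹ * σ₃⁻¹)))) := by rw [← cac]
  _ = Δ * (σ₃ * σ₂ * σ₁ * σ₂⁻¹ * σ₃⁻¹) := by group

lemma tB35 : τ * (σ₄ * σ₃ * σ₄⁻¹) * τ⁻¹ = σ₃ * σ₂ * σ₁ * σ₂⁻¹ * σ₃⁻¹ := by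
  calc τ * (σ₄ * σ₃ * σ₄⁻¹) * τ⁻¹ = Δ⁻¹ * ((σ₄ * σ₃ * σ₄⁻¹) * Δ) := by group
  _ = Δ⁻¹ * (Δ * (σ₃ * σ₂ * σ₁ * σ₂⁻¹ * σ₃⁻¹)) := by rw [eq35]
  _ = σ₃ * σ₂ * σ₁ * σ₂⁻¹ * σ₃⁻¹ := by group

lemma eq25 : (σ₄ * σ₃ * σ₂ * σ₃⁻¹ * σ₄⁻¹) * Δ = Δ * (σ₂ * σ₁ * σ₂⁻¹) := by
  calc (σ₄ * σ₃ * σ₂ * σ₃⁻¹ * σ₄⁻¹) * Δ = (σ₄ * σ₃ * σ₂) * ((σ₂ * σ₁ * σ₂) * σ₂⁻¹) := by group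
  _ = (σ₄ * σ₃ * σ₂) * ((σ₁ * σ₂ * σ₁) * σ₂⁻¹) := by rw [← rab]
  _ = Δ * (σ₂ * σ₁ * σ₂⁻¹) := by group

lemma tB25 : τ * (σ₄ * σ₃ * σ₂ * σ₃⁻¹ * σ₄⁻¹) * τ⁻¹ = σ₂ * σ₁ * σ₂⁻¹ := by
  calc τ * (σ₄ * σ₃ * σ₂ * σ₃⁻¹ * σ₄⁻¹) * τ⁻¹
      = Δ⁻¹ * ((σ₄ * σ₃ * σ₂ * σ₃⁻¹ * σ₄⁻¹) * Δ) := by group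
  _ = Δ⁻¹ * (Δ * (σ₂ * σ₁ * σ₂⁻¹)) := by rw [eq25]
  _ = σ₂ * σ₁ * σ₂⁻¹ := by group

lemma gconj4 {g x1 x2 x3 x4 y1 y2 y3 y4 : B5} (h1 : g * x1 * g⁻¹ = y1)
    (h2 : g * x2 * g⁻¹ = y2) (h3 : g * x3 * g⁻¹ = y3) (h4 : g * x4 * g⁻¹ = y4) :
    g * (x1 * x2 * x3 * x4) * g⁻¹ = y1 * y2 * y3 * y4 := by
  conv_rhs => rw [← h1, ← h2, ← h3, ← h4]
  group

lemma conjD {x y : B5} (h : τ * x * τ⁻¹ = y) : Δ * y * Δ⁻¹ = x := by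
  rw [← h]; group

theorem stmt_11 :
    List.Pairwise IsConj
      [band 1 3 * band 2 4 * band 1 4 * band 2 5,
       band 1 3 * band 2 4 * band 3 5 * band 1 4,
       band 1 3 * band 2 4 * band 3 5 * band 2 5,
       band 1 3 * band 3 5 * band 1 4 * band 2 5,
       band 1 4 * band 2 5 * band 2 4 * band 3 5] := by
  rw [e13, e24, e14, e25, e35]
  have s5 : τ * ((σ₂ * σ₁ * σ₂⁻¹) * (σ₃ * σ₂ * σ₃⁻¹) * (σ₃ * σ₂ * σ₁ * σ₂⁻¹ * σ₃⁻¹) * (σ₄ * σ₃ * σ₂ * σ₃⁻¹ * σ₄⁻¹)) * τ⁻¹ = (σ₃ * σ₂ * σ₃⁻¹) * (σ₄ * σ₃ * σ₄⁻¹) * (σ₄ * σ₃ * σ₂ * σ₃⁻¹ * σ₄⁻¹) * (σ₂ * σ₁ * σ₂⁻¹) :=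
    gconj4 tB13 tB24 tB14 tB25
  have s6 : τ * ((σ₃ * σ₂ * σ₃⁻¹) * (σ₄ * σ₃ * σ₄⁻¹) * (σ₄ * σ₃ * σ₂ * σ₃⁻¹ * σ₄⁻¹) * (σ₂ * σ₁ * σ₂⁻¹)) * τ⁻¹ = (σ₄ * σ₃ * σ₄⁻¹) * (σ₃ * σ₂ * σ₁ * σ₂⁻¹ * σ₃⁻¹) * (σ₂ * σ₁ * σ₂⁻¹) * (σ₃ * σ₂ * σ₃⁻¹) :=
    gconj4 tB24 tB35 tB25 tB13
  have s7 : τ * ((σ₄ * σ₃ * σ₄⁻¹) * (σ₃ * σ₂ * σ₁ * σ₂⁻¹ * σ₃⁻¹) * (σ₂ * σ₁ * σ₂⁻¹) * (σ₃ * σ₂ * σ₃⁻¹)) * τ⁻¹ = (σ₃ * σ₂ * σ₁ * σ₂⁻¹ * σ₃⁻¹) * (σ₄ * σ₃ * σ₂ * σ₃⁻¹ * σ₄⁻¹) * (σ₃ * σ₂ * σ₃⁻¹) * (σ₄ * σ₃ * σ₄⁻¹) :=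
    gconj4 tB35 tB14 tB13 tB24
  have s1 : τ * ((σ₃ * σ₂ * σ₁ * σ₂⁻¹ * σ₃⁻¹) * (σ₄ * σ₃ * σ₂ * σ₃⁻¹ * σ₄⁻¹) * (σ₂ * σ₁ * σ₂⁻¹) * (σ₃ * σ₂ * σ₃⁻¹)) * τ⁻¹ = (σ₄ * σ₃ * σ₂ * σ₃⁻¹ * σ₄⁻¹) * (σ₂ * σ₁ * σ₂⁻¹) * (σ₃ * σ₂ * σ₃⁻¹) * (σ₄ * σ₃ * σ₄⁻¹) :=
    gconj4 tB14 tB25 tB13 tB24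
  have s2 : τ * ((σ₄ * σ₃ * σ₂ * σ₃⁻¹ * σ₄⁻¹) * (σ₂ * σ₁ * σ₂⁻¹) * (σ₃ * σ₂ * σ₃⁻¹) * (σ₄ * σ₃ * σ₄⁻¹)) * τ⁻¹ = (σ₂ * σ₁ * σ₂⁻¹) * (σ₃ * σ₂ * σ₃⁻¹) * (σ₄ * σ₃ * σ₄⁻¹) * (σ₃ * σ₂ * σ₁ * σ₂⁻¹ * σ₃⁻¹) :=
    gconj4 tB25 tB13 tB24 tB35
  have s3 : τ * ((σ₄ * σ₃ * σ₂ * σ₃⁻¹ * σ₄⁻¹) * (σ₂ * σ₁ * σ₂⁻¹) * (σ₃ * σ₂ * σ₃⁻¹) * (σ₃ * σ₂ * σ₁ * σ₂⁻¹ * σ₃⁻¹)) * τ⁻¹ = (σ₂ * σ₁ * σ₂⁻¹) * (σ₃ * σ₂ * σ₃⁻¹) * (σ₄ * σ₃ * σ₄⁻¹) * (σ₄ * σ₃ * σ₂ * σ₃⁻¹ * σ₄⁻¹) :=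
    gconj4 tB25 tB13 tB24 tB14
  have s4 : Δ * ((σ₃ * σ₂ * σ₃⁻¹) * (σ₃ * σ₂ * σ₁ * σ₂⁻¹ * σ₃⁻¹) * (σ₄ * σ₃ * σ₂ * σ₃⁻¹ * σ₄⁻¹) * (σ₂ * σ₁ * σ₂⁻¹)) * Δ⁻¹ = (σ₂ * σ₁ * σ₂⁻¹) * (σ₄ * σ₃ * σ₄⁻¹) * (σ₃ * σ₂ * σ₁ * σ₂⁻¹ * σ₃⁻¹) * (σ₄ * σ₃ * σ₂ * σ₃⁻¹ * σ₄⁻¹) :=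
    gconj4 (conjD tB13) (conjD tB35) (conjD tB14) (conjD tB25)
  have h04 : IsConj ((σ₂ * σ₁ * σ₂⁻¹) * (σ₃ * σ₂ * σ₃⁻¹) * (σ₃ * σ₂ * σ₁ * σ₂⁻¹ * σ₃⁻¹) * (σ₄ * σ₃ * σ₂ * σ₃⁻¹ * σ₄⁻¹)) ((σ₃ * σ₂ * σ₁ * σ₂⁻¹ * σ₃⁻¹) * (σ₄ * σ₃ * σ₂ * σ₃⁻¹ * σ₄⁻¹) * (σ₃ * σ₂ * σ₃⁻¹) * (σ₄ * σ₃ * σ₄⁻¹)) := by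
    refine isConj_iff.mpr ⟨τ * τ * τ, ?_⟩
    calc (τ * τ * τ) * ((σ₂ * σ₁ * σ₂⁻¹) * (σ₃ * σ₂ * σ₃⁻¹) * (σ₃ * σ₂ * σ₁ * σ₂⁻¹ * σ₃⁻¹) * (σ₄ * σ₃ * σ₂ * σ₃⁻¹ * σ₄⁻¹)) * (τ * τ * τ)⁻¹
        = τ * (τ * (τ * ((σ₂ * σ₁ * σ₂⁻¹) * (σ₃ * σ₂ * σ₃⁻¹) * (σ₃ * σ₂ * σ₁ * σ₂⁻¹ * σ₃⁻¹) * (σ₄ * σ₃ * σ₂ * σ₃⁻¹ * σ₄⁻¹)) * τ⁻¹) * τ⁻¹) * τ⁻¹ := by group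
    _ = τ * (τ * ((σ₃ * σ₂ * σ₃⁻¹) * (σ₄ * σ₃ * σ₄⁻¹) * (σ₄ * σ₃ * σ₂ * σ₃⁻¹ * σ₄⁻¹) * (σ₂ * σ₁ * σ₂⁻¹)) * τ⁻¹) * τ⁻¹ := by rw [s5]
    _ = τ * ((σ₄ * σ₃ * σ₄⁻¹) * (σ₃ * σ₂ * σ₁ * σ₂⁻¹ * σ₃⁻¹) * (σ₂ * σ₁ * σ₂⁻¹) * (σ₃ * σ₂ * σ₃⁻¹)) * τ⁻¹ := by rw [s6]
    _ = (σ₃ * σ₂ * σ₁ * σ₂⁻¹ * σ₃⁻¹) * (σ₄ * σ₃ * σ₂ * σ₃⁻¹ * σ₄⁻¹) * (σ₃ * σ₂ * σ₃⁻¹) * (σ₄ * σ₃ * σ₄⁻¹) := s7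
  have h01 : IsConj ((σ₂ * σ₁ * σ₂⁻¹) * (σ₃ * σ₂ * σ₃⁻¹) * (σ₃ * σ₂ * σ₁ * σ₂⁻¹ * σ₃⁻¹) * (σ₄ * σ₃ * σ₂ * σ₃⁻¹ * σ₄⁻¹)) ((σ₂ * σ₁ * σ₂⁻¹) * (σ₃ * σ₂ * σ₃⁻¹) * (σ₄ * σ₃ * σ₄⁻¹) * (σ₃ * σ₂ * σ₁ * σ₂⁻¹ * σ₃⁻¹)) := by
    refine isConj_iff.mpr ⟨τ * τ * ((σ₂ * σ₁ * σ₂⁻¹) * (σ₃ * σ₂ * σ₃⁻¹))⁻¹, ?_⟩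
    calc (τ * τ * ((σ₂ * σ₁ * σ₂⁻¹) * (σ₃ * σ₂ * σ₃⁻¹))⁻¹) * ((σ₂ * σ₁ * σ₂⁻¹) * (σ₃ * σ₂ * σ₃⁻¹) * (σ₃ * σ₂ * σ₁ * σ₂⁻¹ * σ₃⁻¹) * (σ₄ * σ₃ * σ₂ * σ₃⁻¹ * σ₄⁻¹)) * (τ * τ * ((σ₂ * σ₁ * σ₂⁻¹) * (σ₃ * σ₂ * σ₃⁻¹))⁻¹)⁻¹
        = τ * (τ * ((σ₃ * σ₂ * σ₁ * σ₂⁻¹ * σ₃⁻¹) * (σ₄ * σ₃ * σ₂ * σ₃⁻¹ * σ₄⁻¹) * (σ₂ * σ₁ * σ₂⁻¹) * (σ₃ * σ₂ * σ₃⁻¹)) * τ⁻¹) * τ⁻¹ := by group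
    _ = τ * ((σ₄ * σ₃ * σ₂ * σ₃⁻¹ * σ₄⁻¹) * (σ₂ * σ₁ * σ₂⁻¹) * (σ₃ * σ₂ * σ₃⁻¹) * (σ₄ * σ₃ * σ₄⁻¹)) * τ⁻¹ := by rw [s1]
    _ = (σ₂ * σ₁ * σ₂⁻¹) * (σ₃ * σ₂ * σ₃⁻¹) * (σ₄ * σ₃ * σ₄⁻¹) * (σ₃ * σ₂ * σ₁ * σ₂⁻¹ * σ₃⁻¹) := s2
  have h02 : IsConj ((σ₂ * σ₁ * σ₂⁻¹) * (σ₃ * σ₂ * σ₃⁻¹) * (σ₃ * σ₂ * σ₁ * σ₂⁻¹ * σ₃⁻¹) * (σ₄ * σ₃ * σ₂ * σ₃⁻¹ * σ₄⁻¹)) ((σ₂ * σ₁ * σ₂⁻¹) * (σ₃ * σ₂ * σ₃⁻¹) * (σ₄ * σ₃ * σ₄⁻¹) * (σ₄ * σ₃ * σ₂ * σ₃⁻¹ * σ₄⁻¹)) := by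
    refine isConj_iff.mpr ⟨τ * (σ₄ * σ₃ * σ₂ * σ₃⁻¹ * σ₄⁻¹), ?_⟩
    calc (τ * (σ₄ * σ₃ * σ₂ * σ₃⁻¹ * σ₄⁻¹)) * ((σ₂ * σ₁ * σ₂⁻¹) * (σ₃ * σ₂ * σ₃⁻¹) * (σ₃ * σ₂ * σ₁ * σ₂⁻¹ * σ₃⁻¹) * (σ₄ * σ₃ * σ₂ * σ₃⁻¹ * σ₄⁻¹)) * (τ * (σ₄ * σ₃ * σ₂ * σ₃⁻¹ * σ₄⁻¹))⁻¹
        = τ * ((σ₄ * σ₃ * σ₂ * σ₃⁻¹ * σ₄⁻¹) * (σ₂ * σ₁ * σ₂⁻¹) * (σ₃ * σ₂ * σ₃⁻¹) * (σ₃ * σ₂ * σ₁ * σ₂⁻¹ * σ₃⁻¹)) * τ⁻¹ := by group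
    _ = (σ₂ * σ₁ * σ₂⁻¹) * (σ₃ * σ₂ * σ₃⁻¹) * (σ₄ * σ₃ * σ₄⁻¹) * (σ₄ * σ₃ * σ₂ * σ₃⁻¹ * σ₄⁻¹) := s3
  have h03 : IsConj ((σ₂ * σ₁ * σ₂⁻¹) * (σ₃ * σ₂ * σ₃⁻¹) * (σ₃ * σ₂ * σ₁ * σ₂⁻¹ * σ₃⁻¹) * (σ₄ * σ₃ * σ₂ * σ₃⁻¹ * σ₄⁻¹)) ((σ₂ * σ₁ * σ₂⁻¹) * (σ₄ * σ₃ * σ₄⁻¹) * (σ₃ * σ₂ * σ₁ * σ₂⁻¹ * σ₃⁻¹) * (σ₄ * σ₃ * σ₂ * σ₃⁻¹ * σ₄⁻¹)) := by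
    refine isConj_iff.mpr ⟨Δ * (σ₂ * σ₁ * σ₂⁻¹)⁻¹, ?_⟩
    calc (Δ * (σ₂ * σ₁ * σ₂⁻¹)⁻¹) * ((σ₂ * σ₁ * σ₂⁻¹) * (σ₃ * σ₂ * σ₃⁻¹) * (σ₃ * σ₂ * σ₁ * σ₂⁻¹ * σ₃⁻¹) * (σ₄ * σ₃ * σ₂ * σ₃⁻¹ * σ₄⁻¹)) * (Δ * (σ₂ * σ₁ * σ₂⁻¹)⁻¹)⁻¹
        = Δ * ((σ₃ * σ₂ * σ₃⁻¹) * (σ₃ * σ₂ * σ₁ * σ₂⁻¹ * σ₃⁻¹) * (σ₄ * σ₃ * σ₂ * σ₃⁻¹ * σ₄⁻¹) * (σ₂ * σ₁ * σ₂⁻¹)) * Δ⁻¹ := by group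
    _ = (σ₂ * σ₁ * σ₂⁻¹) * (σ₄ * σ₃ * σ₄⁻¹) * (σ₃ * σ₂ * σ₁ * σ₂⁻¹ * σ₃⁻¹) * (σ₄ * σ₃ * σ₂ * σ₃⁻¹ * σ₄⁻¹) := s4
  have h12 := h01.symm.trans h02
  have h13 := h01.symm.trans h03
  have h14 := h01.symm.trans h04
  have h23 := h02.symm.trans h03
  have h24 := h02.symm.trans h04
  have h34 := h03.symm.trans h04
  simp only [List.pairwise_cons, List.mem_cons, List.mem_singleton, List.not_mem_nil,
    List.Pairwise.nil, forall_eq_or_imp, forall_eq, IsEmpty.forall_iff, imp_true_iff, and_true]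
  exact ⟨⟨h01, h02, h03, h04⟩, ⟨h12, h13, h14⟩, ⟨h23, h24⟩, h34⟩
end
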